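/- Let D be a locally finite division ring with center F, and let x be an element of the derived subgroup of the multiplicative group D* (i.e., x is a product of multiplicative commutators of elements of D*). If x^n ∈ F for some positive integer n, then x has finite multiplicative order. -/

import Mathlib

/-- The carrier of a subfield containing the center, as a submodule over the center. -/
def Subfield.centerSubmodule {D : Type*} [DivisionRing D] (E : Subfield D)
    (hE : (Subring.center D : Set D) ⊆ E) : Submodule (Subring.center D) D where
  carrier := E
  add_mem' := fun ha hb => E.add_mem ha hb
  zero_mem' := E.zero_mem
  smul_mem' := fun c x hx => by
    exact E.mul_mem (hE c.2) hx

/-- A division ring `D` is locally finite if, for every finite subset `S` of `D`, the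
division subring generated by the center together with `S` is a finite-dimensional
vector space over the center. -/
def IsLocallyFiniteDivisionRing (D : Type*) [DivisionRing D] : Prop :=
  ∀ S : Finset D,
    FiniteDimensional (Subring.center D)
      ((Subfield.closure ((Subring.center D : Set D) ∪ (S : Set D))).centerSubmodule
        (Set.union_subset_iff.mp Subfield.subset_closure).1)

open scoped commutatorElement

set_option maxHeartbeats 1000000 in
set_option synthInstance.maxHeartbeats 400000 in
/-- Let `D` be a locally finite division ring with center `F`, and let `x` be an element
of the derived subgroup of `Dˣ`.  If `x ^ n ∈ F` for some positive integer `n`, then `x`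
has finite multiplicative order. -/
theorem stmt3 {D : Type*} [DivisionRing D] (hD : IsLocallyFiniteDivisionRing D)
    (x : Dˣ) (hx : x ∈ commutator Dˣ)
    (n : ℕ) (hn : 0 < n) (hxn : ((x : D)) ^ n ∈ Subring.center D) :
    IsOfFinOrder x := by
  classical
  set F := Subring.center D with hF
  -- Step 1: write x as a product of commutators
  rw [commutator_eq_closure] at hx
  have hx' : x ∈ Submonoid.closure (commutatorSet Dˣ ∪ (commutatorSet Dˣ)⁻¹) := by
    rw [← Subgroup.closure_toSubmonoid]; exact hx
  obtain ⟨l, hl, hprod⟩ := Submonoid.exists_list_of_mem_closure hx'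
  have hcomm : ∀ y ∈ l, ∃ a b : Dˣ, ⁅a, b⁆ = y := by
    intro y hy
    rcases hl y hy with h | h
    · exact h
    · obtain ⟨a, b, hab⟩ := Set.mem_inv.mp h
      exact ⟨b, a, by rw [← commutatorElement_inv, hab, inv_inv]⟩
  -- turn l into a list of pairs
  have hL : ∀ l' : List Dˣ, (∀ y ∈ l', ∃ a b : Dˣ, ⁅a, b⁆ = y) →
      ∃ L : List (Dˣ × Dˣ), L.map (fun p => ⁅p.1, p.2⁆) = l' := by
    intro l'
    induction l' with
    | nil => exact fun _ => ⟨[], rfl⟩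
    | cons y t ih =>
      intro h
      obtain ⟨L, hLt⟩ := ih (fun z hz => h z (List.mem_cons_of_mem _ hz))
      obtain ⟨a, b, hab⟩ := h y List.mem_cons_self
      exact ⟨(a, b) :: L, by simp [hLt, hab]⟩
  obtain ⟨L, rfl⟩ := hL l hcomm
  -- Step 2: the subfield generated by the entries
  set S : Finset D :=
    (L.map (fun p => ((p.1 : Dˣ) : D)) ++ L.map (fun p => ((p.2 : Dˣ) : D))).toFinset with hS
  set E : Subfield D := Subfield.closure ((F : Set D) ∪ (S : Set D)) with hEdef
  have hE : (F : Set D) ⊆ E := (Set.union_subset_iff.mp Subfield.subset_closure).1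
  have hmem1 : ∀ p ∈ L, ((p.1 : Dˣ) : D) ∈ E := by
    intro p hp
    exact Subfield.subset_closure (Or.inr (by
      simp only [hS, List.mem_toFinset, Finset.mem_coe, List.mem_append, List.mem_map]
      exact Or.inl ⟨p, hp, rfl⟩))
  have hmem2 : ∀ p ∈ L, ((p.2 : Dˣ) : D) ∈ E := by
    intro p hp
    exact Subfield.subset_closure (Or.inr (by
      simp only [hS, List.mem_toFinset, Finset.mem_coe, List.mem_append, List.mem_map]
      exact Or.inr ⟨p, hp, rfl⟩))
  set A : Subalgebra F D := { E.toSubring with algebraMap_mem' := fun c => hE c.2 } with hA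
  have memA : ∀ d : D, d ∈ A ↔ d ∈ E := fun d => Iff.rfl
  -- finite dimensionality
  have hfd : FiniteDimensional F A := by
    have h1 := hD S
    have h2 : E.centerSubmodule hE = Subalgebra.toSubmodule A := by
      ext d; exact Iff.rfl
    rw [h2] at h1
    exact Module.Finite.equiv (Subalgebra.toSubmoduleEquiv A)
  have hnt : Nontrivial A := nontrivial_of_ne 0 1 (fun h => by
    have := congrArg Subtype.val h
    simp at this)
  set N : A →* F := Algebra.norm F with hN
  -- norm of a unit-commutator element is 1
  have unitMul : ∀ (u : Dˣ) (hu : (u : D) ∈ A) (hv : ((u⁻¹ : Dˣ) : D) ∈ A),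
      N ⟨u, hu⟩ * N ⟨((u⁻¹ : Dˣ) : D), hv⟩ = 1 := by
    intro u hu hv
    rw [← map_mul]
    have : (⟨(u : D), hu⟩ * ⟨((u⁻¹ : Dˣ) : D), hv⟩ : A) = 1 := by
      apply Subtype.ext
      simp
    rw [this, map_one]
  have invmem : ∀ (u : Dˣ), (u : D) ∈ A → ((u⁻¹ : Dˣ) : D) ∈ A := by
    intro u hu
    rw [memA] at hu ⊢
    rw [Units.val_inv_eq_inv_val]
    exact E.inv_mem hu
  have normComm : ∀ (a b : Dˣ) (ha : (a : D) ∈ A) (hb : (b : D) ∈ A)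
      (h : ((⁅a, b⁆ : Dˣ) : D) ∈ A), N ⟨_, h⟩ = 1 := by
    intro a b ha hb h
    have ha' := invmem a ha
    have hb' := invmem b hb
    have : (⟨((⁅a, b⁆ : Dˣ) : D), h⟩ : A)
        = ⟨(a : D), ha⟩ * ⟨(b : D), hb⟩ * ⟨((a⁻¹ : Dˣ) : D), ha'⟩ * ⟨((b⁻¹ : Dˣ) : D), hb'⟩ := by
      apply Subtype.ext
      simp [commutatorElement_def]
    rw [this, map_mul, map_mul, map_mul]
    have h1 := unitMul a ha ha'
    have h2 := unitMul b hb hb'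
    calc N ⟨(a : D), ha⟩ * N ⟨(b : D), hb⟩ * N ⟨((a⁻¹ : Dˣ) : D), ha'⟩ * N ⟨((b⁻¹ : Dˣ) : D), hb'⟩
        = (N ⟨(a : D), ha⟩ * N ⟨((a⁻¹ : Dˣ) : D), ha'⟩)
          * (N ⟨(b : D), hb⟩ * N ⟨((b⁻¹ : Dˣ) : D), hb'⟩) := by ring
      _ = 1 := by rw [h1, h2, one_mul]
  -- norm of the product is 1
  have key : ∀ l : List (Dˣ × Dˣ), (∀ p ∈ l, ((p.1 : Dˣ) : D) ∈ A ∧ ((p.2 : Dˣ) : D) ∈ A) →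
      ∃ a : A, (a : D) = (((l.map (fun p => ⁅p.1, p.2⁆)).prod : Dˣ) : D) ∧ N a = 1 := by
    intro l
    induction l with
    | nil =>
      exact fun _ => ⟨1, by simp, map_one N⟩
    | cons p t ih =>
      intro hmem
      obtain ⟨aT, haT, hNT⟩ := ih (fun q hq => hmem q (List.mem_cons_of_mem _ hq))
      have hp := hmem p List.mem_cons_self
      have hc : ((⁅p.1, p.2⁆ : Dˣ) : D) ∈ A := by
        rw [memA]
        have h1 := hp.1
        have h2 := hp.2
        rw [memA] at h1 h2
        simp only [commutatorElement_def, Units.val_mul]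
        exact E.mul_mem
          (E.mul_mem (E.mul_mem h1 h2)
            (by rw [Units.val_inv_eq_inv_val]; exact E.inv_mem h1))
          (by rw [Units.val_inv_eq_inv_val]; exact E.inv_mem h2)
      refine ⟨⟨_, hc⟩ * aT, ?_, ?_⟩
      · simp only [MulMemClass.coe_mul, haT, List.map_cons, List.prod_cons, Units.val_mul]
      · rw [map_mul, normComm p.1 p.2 hp.1 hp.2 hc, hNT, one_mul]
  obtain ⟨a, ha, hNa⟩ := key L (fun p hp => ⟨hmem1 p hp, hmem2 p hp⟩)
  rw [hprod] at ha
  have hxA : ((x : Dˣ) : D) ∈ A := ha ▸ a.2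
  have hNx : N ⟨(x : D), hxA⟩ = 1 := by
    rw [show (⟨(x : D), hxA⟩ : A) = a from Subtype.ext ha.symm]
    exact hNa
  -- Step 3: conclude
  set m := Module.finrank F A with hm
  have : NoZeroSMulDivisors F ↥A := by
    constructor
    intro c a h
    by_cases hcz : c = 0
    · exact Or.inl hcz
    · refine Or.inr ?_
      have := congrArg (fun y : A => c⁻¹ • y) h
      simpa [smul_smul, inv_mul_cancel₀ hcz] using this
  have hmpos : 0 < m := Module.finrank_pos
  set c : F := ⟨((x : D)) ^ n, hxn⟩ with hc
  have halg : algebraMap F A c = (⟨(x : D), hxA⟩ : A) ^ n := by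
    apply Subtype.ext
    push_cast
    rfl
  have hcm : c ^ m = 1 := by
    have := Algebra.norm_algebraMap (S := A) c
    rw [halg, map_pow, hNx, one_pow] at this
    exact this.symm
  have hxnm : ((x : D)) ^ (n * m) = 1 := by
    have := congrArg Subtype.val hcm
    simpa [hc, ← pow_mul] using this
  refine isOfFinOrder_iff_pow_eq_one.mpr ⟨n * m, by positivity, ?_⟩
  ext
  push_cast
  exact hxnm
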